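/- For every natural number C there exists N such that for all n ≥ N, every solvable subgroup H of the alternating group on Fin n has index greater than C. (In other words, the minimal index of a solvable subgroup of the alternating group Aₙ tends to infinity with n.) -/

import Mathlib

open Equiv Equiv.Perm Subgroup

section blocks
variable {n : ℕ}

/-- The `i`-th block embedding `Fin 5 ↪ Fin n`. -/
def blockEmb {m : ℕ} (h : 5 * m ≤ n) (i : Fin m) : Fin 5 ↪ Fin n where
  toFun x := ⟨5 * i.1 + x.1, by have := i.2; have := x.2; omega⟩
  inj' := by
    intro x y hxy
    have := congrArg Fin.val hxy
    simp only at this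
    exact Fin.ext (by omega)

lemma blockEmb_disjoint_range {m : ℕ} (h : 5 * m ≤ n) {i j : Fin m} (hij : i ≠ j)
    {z : Fin n} (hi : z ∈ Set.range (blockEmb h i)) : z ∉ Set.range (blockEmb h j) := by
  rintro ⟨y, rfl⟩
  obtain ⟨x, hx⟩ := hi
  have hx' := congrArg Fin.val hx
  change 5 * i.1 + x.1 = 5 * j.1 + y.1 at hx'
  have := x.2; have := y.2
  exact hij (Fin.ext (by omega))

lemma sign_viaEmbedding (e : Perm (Fin 5)) (ι : Fin 5 ↪ Fin n) :
    sign (e.viaEmbedding ι) = sign e := by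
  unfold Equiv.Perm.viaEmbedding
  letI : DecidablePred (· ∈ Set.range ι.toFun) := fun a => Classical.propDecidable _
  exact sign_extendDomain e _

/-- The homomorphism `A₅ →* Aₙ` induced by an embedding `Fin 5 ↪ Fin n`. -/
noncomputable def phi (ι : Fin 5 ↪ Fin n) :
    alternatingGroup (Fin 5) →* alternatingGroup (Fin n) :=
  ((viaEmbeddingHom ι).comp (alternatingGroup (Fin 5)).subtype).codRestrict _ (fun g => by
    rw [Equiv.Perm.mem_alternatingGroup, MonoidHom.comp_apply, viaEmbeddingHom_apply,
      Subgroup.coe_subtype, sign_viaEmbedding]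
    exact Equiv.Perm.mem_alternatingGroup.mp g.2)

lemma phi_coe (ι : Fin 5 ↪ Fin n) (g : alternatingGroup (Fin 5)) :
    ((phi ι g : alternatingGroup (Fin n)) : Perm (Fin n)) = (g : Perm (Fin 5)).viaEmbedding ι :=
  rfl

lemma phi_injective (ι : Fin 5 ↪ Fin n) : Function.Injective (phi ι) := by
  intro x y hxy
  have : ((phi ι x : alternatingGroup (Fin n)) : Perm (Fin n)) = phi ι y := by rw [hxy]
  rw [phi_coe, phi_coe] at this
  exact Subtype.ext (viaEmbeddingHom_injective ι (by simpa [viaEmbeddingHom_apply] using this))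

lemma phi_commute {m : ℕ} (h : 5 * m ≤ n) {i j : Fin m} (hij : i ≠ j)
    (s t : alternatingGroup (Fin 5)) :
    Commute (phi (blockEmb h i) s) (phi (blockEmb h j) t) := by
  have key : Commute ((phi (blockEmb h i) s : Perm (Fin n)))
      ((phi (blockEmb h j) t : Perm (Fin n))) := by
    apply Equiv.Perm.Disjoint.commute
    intro x
    by_cases hx : x ∈ Set.range (blockEmb h i)
    · right
      rw [phi_coe]
      exact viaEmbedding_apply_of_notMem _ _ x (blockEmb_disjoint_range h hij hx)
    · left
      rw [phi_coe]
      exact viaEmbedding_apply_of_notMem _ _ x hx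
  exact Subtype.ext (by simpa [Subgroup.coe_mul] using key.eq)

end blocks

theorem stmt_2 (C : ℕ) :
    ∃ N : ℕ, ∀ n : ℕ, N ≤ n →
      ∀ H : Subgroup (alternatingGroup (Fin n)), IsSolvable H → C < H.index := by
  refine ⟨5 * (C.factorial + 1), fun n hn H hH => ?_⟩
  by_contra hC
  push_neg at hC
  set K := H.normalCore with hK
  have hKH : K ≤ H := H.normalCore_le
  have hKnormal : K.Normal := H.normalCore_normal
  haveI hKsolv : Group.IsSolvable K :=
    by haveI : Group.IsSolvable H := hH; exact solvable_of_solvable_injective (Subgroup.inclusion_injective hKH)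
  -- index bound for the normal core
  have hKindex : K.index ≤ C.factorial := by
    haveI : Fintype ((alternatingGroup (Fin n)) ⧸ H) := Fintype.ofFinite _
    haveI : DecidableEq ((alternatingGroup (Fin n)) ⧸ H) := Classical.decEq _
    rw [hK, Subgroup.normalCore_eq_ker, Subgroup.index_ker]
    refine le_trans (Subgroup.card_le_card_group _) ?_
    rw [Nat.card_eq_fintype_card, Fintype.card_perm, ← Nat.card_eq_fintype_card,
      ← Subgroup.index_eq_card]
    exact Nat.factorial_le hC
  -- two noncommuting elements of A₅
  let T : alternatingGroup (Fin 5) := ⟨swap 0 1 * swap 0 2, Equiv.Perm.mem_alternatingGroup.mpr (by decide)⟩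
  let S : alternatingGroup (Fin 5) := ⟨swap 0 1 * swap 0 3, Equiv.Perm.mem_alternatingGroup.mpr (by decide)⟩
  have hTS : T * S ≠ S * T := by
    intro hc
    have := congrArg (Subtype.val) hc
    revert this
    decide
  -- pigeonhole on the images of the block 3-cycles in G ⧸ K
  have h5m : 5 * (C.factorial + 1) ≤ n := hn
  let t : Fin (C.factorial + 1) → alternatingGroup (Fin n) := fun i => phi (blockEmb h5m i) T
  haveI : Fintype ((alternatingGroup (Fin n)) ⧸ K) := Fintype.ofFinite _
  obtain ⟨i, j, hij, hq⟩ :=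
    Fintype.exists_ne_map_eq_of_card_lt (fun i : Fin (C.factorial + 1) => ((t i : alternatingGroup (Fin n)) : (alternatingGroup (Fin n)) ⧸ K))
      (by
        rw [Fintype.card_fin, ← Nat.card_eq_fintype_card, ← Subgroup.index_eq_card]
        omega)
  have hx : (t i)⁻¹ * t j ∈ K := (QuotientGroup.eq).mp hq
  -- the comap of K in A₅ is a normal subgroup
  have hLnormal : (K.comap (phi (blockEmb h5m i))).Normal := hKnormal.comap _
  rcases hLnormal.eq_bot_or_eq_top with hL | hL
  · -- comap is ⊥ : the commutator argument
    have key : ∀ s : alternatingGroup (Fin 5),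
        phi (blockEmb h5m i) (T⁻¹ * s * T * s⁻¹) ∈ K := by
      intro s
      set g := phi (blockEmb h5m i) s with hg
      have hcomm : t j * g = g * t j := phi_commute h5m (Ne.symm hij) T s
      have hw : ((t i)⁻¹ * t j) * g * ((t i)⁻¹ * t j)⁻¹ * g⁻¹ ∈ K := by
        have h1 : g * ((t i)⁻¹ * t j)⁻¹ * g⁻¹ ∈ K := hKnormal.conj_mem _ (inv_mem hx) g
        have := mul_mem hx h1
        convert this using 1
        group
      have heq : ((t i)⁻¹ * t j) * g * ((t i)⁻¹ * t j)⁻¹ * g⁻¹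
          = phi (blockEmb h5m i) (T⁻¹ * s * T * s⁻¹) := by
        have : ((t i)⁻¹ * t j) * g * ((t i)⁻¹ * t j)⁻¹ * g⁻¹
            = (t i)⁻¹ * (t j * g * (t j)⁻¹) * (t i) * g⁻¹ := by group
        have h2 : (t i)⁻¹ * (t j * g * (t j)⁻¹) * (t i) * g⁻¹
            = (t i)⁻¹ * g * (t i) * g⁻¹ := by rw [hcomm, mul_inv_cancel_right]
        rw [this, h2]
        simp only [t, hg, ← map_inv, ← map_mul]
      rwa [heq] at hw
    have hcomm : T⁻¹ * S * T * S⁻¹ = 1 := by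
      have := key S
      rw [← Subgroup.mem_comap] at this
      rw [hL] at this
      simpa using this
    apply hTS
    have : T⁻¹ * (S * T) * S⁻¹ = 1 := by rw [← hcomm]; group
    calc T * S = T * (T⁻¹ * (S * T) * S⁻¹) * S := by rw [this]; group
      _ = S * T := by group
  · -- comap is ⊤ : A₅ embeds into the solvable group K
    have hmem : ∀ g : alternatingGroup (Fin 5), phi (blockEmb h5m i) g ∈ K := by
      intro g
      have : g ∈ K.comap (phi (blockEmb h5m i)) := by rw [hL]; trivial
      exact this
    haveI : Group.IsSolvable (alternatingGroup (Fin 5)) := by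
      apply solvable_of_solvable_injective (G' := K)
        (f := (phi (blockEmb h5m i)).codRestrict K hmem)
      intro x y hxy
      apply phi_injective (blockEmb h5m i)
      exact congrArg Subtype.val hxy
    have : IsSolvable (Perm (Fin 5)) := by
      apply solvable_of_ker_le_range (alternatingGroup (Fin 5)).subtype sign
      rw [Subgroup.range_subtype]
      rw [← alternatingGroup_eq_sign_ker]
    exact Equiv.Perm.fin_5_not_solvable this
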